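/- arXiv:2302.11505 — 2 statements merged into one kernel-verified Lean document; each statement's English description precedes it below -/
import Mathlib

section
/- (Strong sign preservation of the SFE estimand.) Let Assumption 2 hold and assume positivity. If μ(1,a) − μ(0,a) > 0 for every a∈𝒜, then Δ_sfe > 0. -/
open MeasureTheory ProbabilityTheory BigOperators

noncomputable section

variable {Ω : Type} [MeasurableSpace Ω] {K : ℕ}

/-- Expectation of a real-valued random variable. -/
def Exp (P : Measure Ω) (Z : Ω → ℝ) : ℝ := ∫ ω, Z ω ∂P

/-- Probability of an event, as a real number. -/
def Pr (P : Measure Ω) (s : Set Ω) : ℝ := (P s).toReal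

/-- Conditional expectation given an event, defined as a ratio. -/
def CE (P : Measure Ω) (Z : Ω → ℝ) (s : Set Ω) : ℝ :=
  Exp P (fun ω => Z ω * s.indicator (fun _ => (1:ℝ)) ω) / Pr P s

/-- Covariance of two real-valued random variables. -/
def Cov (P : Measure Ω) (Z W : Ω → ℝ) : ℝ :=
  Exp P (fun ω => Z ω * W ω) - Exp P Z * Exp P W

/-- The event {D = d, A = a}. -/
def evDA (D : Ω → ℕ) (A : Ω → Fin K → ℕ) (d : ℕ) (a : Fin K → ℕ) : Set Ω :=
  {ω | D ω = d ∧ A ω = a}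

/-- The event {D = d}. -/
def evD (D : Ω → ℕ) (d : ℕ) : Set Ω := {ω | D ω = d}

/-- The event {A = a}. -/
def evA (A : Ω → Fin K → ℕ) (a : Fin K → ℕ) : Set Ω := {ω | A ω = a}

/-- π_d(a) = P(A = a | D = d). -/
def piP (P : Measure Ω) (D : Ω → ℕ) (A : Ω → Fin K → ℕ) (d : ℕ) (a : Fin K → ℕ) : ℝ :=
  Pr P (evDA D A d a) / Pr P (evD D d)

/-- The observed outcome Y = Σ_{(d,a)} Y(d,a)·1{D=d, A=a}. -/
def Yobs (D : Ω → ℕ) (A : Ω → Fin K → ℕ) (𝒜 : Finset (Fin K → ℕ))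
    (Ypot : ℕ → (Fin K → ℕ) → Ω → ℝ) : Ω → ℝ :=
  fun ω => ∑ d ∈ ({0, 1} : Finset ℕ), ∑ a ∈ 𝒜,
    Ypot d a ω * (if D ω = d ∧ A ω = a then (1:ℝ) else 0)

/-- μ(d,a) = E[Y(d,a)]. -/
def muP (P : Measure Ω) (Ypot : ℕ → (Fin K → ℕ) → Ω → ℝ) (d : ℕ) (a : Fin K → ℕ) : ℝ :=
  Exp P (Ypot d a)

/-- The random vector (D, A) as a real-valued family indexed by Unit ⊕ Fin K. -/
def DAvec (D : Ω → ℕ) (A : Ω → Fin K → ℕ) : Unit ⊕ Fin K → Ω → ℝ :=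
  Sum.elim (fun _ ω => (D ω : ℝ)) (fun j ω => (A ω j : ℝ))

/-- The (K+1)×(K+1) covariance matrix of (D, A). -/
def covDAmat (P : Measure Ω) (D : Ω → ℕ) (A : Ω → Fin K → ℕ) :
    Matrix (Unit ⊕ Fin K) (Unit ⊕ Fin K) ℝ :=
  Matrix.of fun i j => Cov P (DAvec D A i) (DAvec D A j)

/-- The K×K covariance matrix Var(A). -/
def varAmat (P : Measure Ω) (A : Ω → Fin K → ℕ) : Matrix (Fin K) (Fin K) ℝ :=
  Matrix.of fun i j => Cov P (fun ω => (A ω i : ℝ)) (fun ω => (A ω j : ℝ))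

/-- The row vector Cov(D, A). -/
def covDA (P : Measure Ω) (D : Ω → ℕ) (A : Ω → Fin K → ℕ) : Fin K → ℝ :=
  fun j => Cov P (fun ω => (D ω : ℝ)) (fun ω => (A ω j : ℝ))

/-- M = Cov(D,A) ⬝ Var(A)⁻¹. -/
def Mlong (P : Measure Ω) (D : Ω → ℕ) (A : Ω → Fin K → ℕ) : Fin K → ℝ :=
  fun j => ∑ i, covDA P D A i * (varAmat P A)⁻¹ i j

/-- Var(D). -/
def varD (P : Measure Ω) (D : Ω → ℕ) : ℝ :=
  Cov P (fun ω => (D ω : ℝ)) (fun ω => (D ω : ℝ))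

/-- denom = Var(D) − Cov(D,A)·Var(A)⁻¹·Cov(A,D). -/
def denomL (P : Measure Ω) (D : Ω → ℕ) (A : Ω → Fin K → ℕ) : ℝ :=
  varD P D - ∑ j, Mlong P D A j * covDA P D A j

/-- The long-regression weight ω_dce^l(a). -/
def wdceL (P : Measure Ω) (D : Ω → ℕ) (A : Ω → Fin K → ℕ) (a : Fin K → ℕ) : ℝ :=
  piP P D A 1 a *
    (varD P D - Pr P (evD D 1) *
      ∑ j, Mlong P D A j * ((a j : ℝ) - Exp P (fun ω => (A ω j : ℝ)))) / denomL P D A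

/-- The long-regression weight ω_ind^l(a). -/
def windL (P : Measure Ω) (D : Ω → ℕ) (A : Ω → Fin K → ℕ) (a : Fin K → ℕ) : ℝ :=
  (varD P D * (piP P D A 1 a - piP P D A 0 a) -
    Pr P (evA A a) * ∑ j, Mlong P D A j * ((a j : ℝ) - Exp P (fun ω => (A ω j : ℝ))))
  / denomL P D A

/-- The residual of the long regression of Y on (1, D, A). -/
def residLong (D : Ω → ℕ) (A : Ω → Fin K → ℕ) (𝒜 : Finset (Fin K → ℕ))
    (Ypot : ℕ → (Fin K → ℕ) → Ω → ℝ) (Δ θ₀ : ℝ) (θ : Fin K → ℝ) : Ω → ℝ :=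
  fun ω => Yobs D A 𝒜 Ypot ω - Δ * (D ω : ℝ) - θ₀ - ∑ j, θ j * (A ω j : ℝ)

/-- The random vector W = (A, A·D) as a real-valued family indexed by Fin K ⊕ Fin K. -/
def Wvec (D : Ω → ℕ) (A : Ω → Fin K → ℕ) : Fin K ⊕ Fin K → Ω → ℝ :=
  Sum.elim (fun j ω => (A ω j : ℝ)) (fun j ω => (A ω j : ℝ) * (D ω : ℝ))

/-- The 2K×2K covariance matrix Var(W), W = (A, AD). -/
def varWmat (P : Measure Ω) (D : Ω → ℕ) (A : Ω → Fin K → ℕ) :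
    Matrix (Fin K ⊕ Fin K) (Fin K ⊕ Fin K) ℝ :=
  Matrix.of fun u v => Cov P (Wvec D A u) (Wvec D A v)

/-- The row vector Cov(D, W). -/
def covDW (P : Measure Ω) (D : Ω → ℕ) (A : Ω → Fin K → ℕ) : Fin K ⊕ Fin K → ℝ :=
  fun u => Cov P (fun ω => (D ω : ℝ)) (Wvec D A u)

/-- M = Cov(D,W) ⬝ Var(W)⁻¹ for the interaction regression. -/
def Minter (P : Measure Ω) (D : Ω → ℕ) (A : Ω → Fin K → ℕ) : Fin K ⊕ Fin K → ℝ :=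
  fun v => ∑ u, covDW P D A u * (varWmat P D A)⁻¹ u v

/-- denom = Var(D) − M·Cov(W,D) for the interaction regression. -/
def denomI (P : Measure Ω) (D : Ω → ℕ) (A : Ω → Fin K → ℕ) : ℝ :=
  varD P D - ∑ v, Minter P D A v * covDW P D A v

/-- E[A_j | D = 1]. -/
def condA1 (P : Measure Ω) (D : Ω → ℕ) (A : Ω → Fin K → ℕ) (j : Fin K) : ℝ :=
  CE P (fun ω => (A ω j : ℝ)) (evD D 1)

/-- The random vector (D, A, AD) as a real-valued family. -/
def DADvec (D : Ω → ℕ) (A : Ω → Fin K → ℕ) : Unit ⊕ (Fin K ⊕ Fin K) → Ω → ℝ :=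
  Sum.elim (fun _ ω => (D ω : ℝ)) (Wvec D A)

/-- The (2K+1)×(2K+1) covariance matrix of (D, A, AD). -/
def covDADmat (P : Measure Ω) (D : Ω → ℕ) (A : Ω → Fin K → ℕ) :
    Matrix (Unit ⊕ (Fin K ⊕ Fin K)) (Unit ⊕ (Fin K ⊕ Fin K)) ℝ :=
  Matrix.of fun i j => Cov P (DADvec D A i) (DADvec D A j)

/-- The interaction-regression weight ω_dce^i(a). -/
def wdceI (P : Measure Ω) (D : Ω → ℕ) (A : Ω → Fin K → ℕ) (a : Fin K → ℕ) : ℝ :=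
  piP P D A 1 a *
    (varD P D
      - Pr P (evD D 1) *
          ∑ j, Minter P D A (Sum.inl j) * ((a j : ℝ) - Exp P (fun ω => (A ω j : ℝ)))
      - Pr P (evD D 1) *
          ∑ j, Minter P D A (Sum.inr j) * ((a j : ℝ) - Pr P (evD D 1) * condA1 P D A j))
  / denomI P D A

/-- The interaction-regression weight ω_ind^i(a). -/
def windI (P : Measure Ω) (D : Ω → ℕ) (A : Ω → Fin K → ℕ) (a : Fin K → ℕ) : ℝ :=
  (varD P D * (piP P D A 1 a - piP P D A 0 a)
    - ∑ j, Minter P D A (Sum.inl j) * Pr P (evA A a) * ((a j : ℝ) - Exp P (fun ω => (A ω j : ℝ)))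
    - Pr P (evD D 1) *
        ∑ j, Minter P D A (Sum.inr j) *
          (piP P D A 1 a * (a j : ℝ) - Pr P (evA A a) * condA1 P D A j))
  / denomI P D A

/-- The residual of the interaction regression of Y on (1, D, A, AD). -/
def residInter (D : Ω → ℕ) (A : Ω → Fin K → ℕ) (𝒜 : Finset (Fin K → ℕ))
    (Ypot : ℕ → (Fin K → ℕ) → Ω → ℝ) (Δ θ₀ : ℝ) (θ lam : Fin K → ℝ) : Ω → ℝ :=
  fun ω => Yobs D A 𝒜 Ypot ω - Δ * (D ω : ℝ) - θ₀ - (∑ j, θ j * (A ω j : ℝ))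
    - ∑ j, lam j * (A ω j : ℝ) * (D ω : ℝ)

/-- P(D = d | A = a). -/
def condDgivenA (P : Measure Ω) (D : Ω → ℕ) (A : Ω → Fin K → ℕ) (d : ℕ) (a : Fin K → ℕ) : ℝ :=
  Pr P (evDA D A d a) / Pr P (evA A a)

/-- The SFE weight ω_sfe(a). -/
def wsfe (P : Measure Ω) (D : Ω → ℕ) (A : Ω → Fin K → ℕ) (𝒜 : Finset (Fin K → ℕ))
    (a : Fin K → ℕ) : ℝ :=
  condDgivenA P D A 1 a * condDgivenA P D A 0 a * Pr P (evA A a) /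
    ∑ a' ∈ 𝒜, condDgivenA P D A 1 a' * condDgivenA P D A 0 a' * Pr P (evA A a')

/-- The residual of the SFE regression of Y on (D, {1{A=a}}). -/
def residSFE (D : Ω → ℕ) (A : Ω → Fin K → ℕ) (𝒜 : Finset (Fin K → ℕ))
    (Ypot : ℕ → (Fin K → ℕ) → Ω → ℝ) (Δ : ℝ) (θ : (Fin K → ℕ) → ℝ) : Ω → ℝ :=
  fun ω => Yobs D A 𝒜 Ypot ω - Δ * (D ω : ℝ) -
    ∑ a ∈ 𝒜, θ a * (if A ω = a then (1:ℝ) else 0)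

/-- The residual of the saturated regression of Y on ({1{A=a}}, {D·1{A=a}}). -/
def residSAT (D : Ω → ℕ) (A : Ω → Fin K → ℕ) (𝒜 : Finset (Fin K → ℕ))
    (Ypot : ℕ → (Fin K → ℕ) → Ω → ℝ) (γ Δsat : (Fin K → ℕ) → ℝ) : Ω → ℝ :=
  fun ω => Yobs D A 𝒜 Ypot ω - (∑ a ∈ 𝒜, γ a * (if A ω = a then (1:ℝ) else 0)) -
    ∑ a ∈ 𝒜, Δsat a * (D ω : ℝ) * (if A ω = a then (1:ℝ) else 0)

/-- Strong sign preservation of the SFE estimand: if μ(1,a) − μ(0,a) > 0 for every a ∈ 𝒜,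
then Δ_sfe > 0. -/
theorem sfe_strong_sign_preservation
    (P : Measure Ω) [IsProbabilityMeasure P]
    (D : Ω → ℕ) (A : Ω → Fin K → ℕ) (𝒜 : Finset (Fin K → ℕ))
    (Ypot : ℕ → (Fin K → ℕ) → Ω → ℝ)
    (hD : Measurable D) (hA : Measurable A)
    (hDbin : ∀ ω, D ω = 0 ∨ D ω = 1)
    (hAsupp : ∀ ω, A ω ∈ 𝒜) (h𝒜0 : (0 : Fin K → ℕ) ∈ 𝒜)
    (hInt : ∀ d ∈ ({0, 1} : Finset ℕ), ∀ a ∈ 𝒜, Integrable (Ypot d a) P)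
    (hpos : ∀ d ∈ ({0, 1} : Finset ℕ), ∀ a ∈ 𝒜, 0 < Pr P (evDA D A d a))
    (hIndep : ∀ d ∈ ({0, 1} : Finset ℕ), ∀ a ∈ 𝒜,
      IndepFun (fun ω => (D ω, A ω)) (Ypot d a) P)
    (Δsfe : ℝ) (θ : (Fin K → ℕ) → ℝ)
    (hO1 : Exp P (fun ω => residSFE D A 𝒜 Ypot Δsfe θ ω * (D ω : ℝ)) = 0)
    (hO2 : ∀ a ∈ 𝒜,
      Exp P (fun ω => residSFE D A 𝒜 Ypot Δsfe θ ω * (if A ω = a then (1:ℝ) else 0)) = 0)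
    (hEff : ∀ a ∈ 𝒜, 0 < muP P Ypot 1 a - muP P Ypot 0 a) :
    0 < Δsfe := by
  classical
  -- notation
  set χ : ℕ → (Fin K → ℕ) → Ω → ℝ :=
    fun d a ω => if D ω = d ∧ A ω = a then (1:ℝ) else 0 with hχdef
  have hSetD : ∀ d : ℕ, MeasurableSet {ω | D ω = d} := fun d =>
    hD (measurableSet_singleton d)
  have hSetA : ∀ a : Fin K → ℕ, MeasurableSet {ω | A ω = a} := fun a =>
    hA (measurableSet_singleton a)
  have hSetDA : ∀ d a, MeasurableSet {ω | D ω = d ∧ A ω = a} := by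
    intro d a
    have : {ω | D ω = d ∧ A ω = a} = {ω | D ω = d} ∩ {ω | A ω = a} := rfl
    rw [this]; exact (hSetD d).inter (hSetA a)
  have hχind : ∀ d a, χ d a = Set.indicator {ω | D ω = d ∧ A ω = a} (fun _ => (1:ℝ)) := by
    intro d a; funext ω; simp [hχdef, Set.indicator_apply]
  have hχmeas : ∀ d a, Measurable (χ d a) := by
    intro d a; rw [hχind]
    exact measurable_const.indicator (hSetDA d a)
  have hχbd : ∀ d a, ∃ C : ℝ, ∀ ω, ‖χ d a ω‖ ≤ C := by
    intro d a; refine ⟨1, fun ω => ?_⟩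
    simp only [hχdef]; split_ifs <;> simp
  have hχint : ∀ d a, Integrable (χ d a) P := by
    intro d a; rw [hχind]
    exact (integrable_const (1:ℝ)).indicator (hSetDA d a)
  have hEχ : ∀ d a, Exp P (χ d a) = Pr P (evDA D A d a) := by
    intro d a
    rw [hχind]
    show ∫ ω, Set.indicator _ _ ω ∂P = _
    rw [integral_indicator_const (1:ℝ) (hSetDA d a)]
    simp [Pr, evDA, Measure.real]
  -- integrability of products
  have hYint : ∀ d ∈ ({0,1} : Finset ℕ), ∀ a ∈ 𝒜, ∀ d' a',
      Integrable (fun ω => Ypot d a ω * χ d' a' ω) P := by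
    intro d hd a ha d' a'
    have : Integrable (fun ω => χ d' a' ω * Ypot d a ω) P :=
      (hInt d hd a ha).bdd_mul (hχmeas d' a').aestronglyMeasurable
        (Filter.Eventually.of_forall (hχbd d' a').choose_spec)
    exact this.congr (Filter.Eventually.of_forall fun ω => mul_comm _ _)
  -- product expectation via independence
  have hprod : ∀ d ∈ ({0,1} : Finset ℕ), ∀ a ∈ 𝒜, ∀ d' a',
      Exp P (fun ω => Ypot d a ω * χ d' a' ω)
        = muP P Ypot d a * Pr P (evDA D A d' a') := by
    intro d hd a ha d' a'
    have hg : Measurable (fun p : ℕ × (Fin K → ℕ) => if p = (d', a') then (1:ℝ) else 0) := by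
      have : (fun p : ℕ × (Fin K → ℕ) => if p = (d', a') then (1:ℝ) else 0)
          = Set.indicator {(d', a')} (fun _ => (1:ℝ)) := by
        funext p; simp [Set.indicator_apply]
      rw [this]
      exact measurable_const.indicator (measurableSet_singleton _)
    have hi : IndepFun
        (fun ω => if (D ω, A ω) = (d', a') then (1:ℝ) else 0) (Ypot d a) P :=
      (hIndep d hd a ha).comp hg measurable_id
    have heq : (fun ω => if (D ω, A ω) = (d', a') then (1:ℝ) else 0) = χ d' a' := by
      funext ω; simp [hχdef, Prod.ext_iff]
    rw [heq] at hi
    have := IndepFun.integral_mul_eq_mul_integral (IndepFun.symm hi) (hInt d hd a ha).aestronglyMeasurable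
      (hχmeas d' a').aestronglyMeasurable
    have h2 : Exp P (fun ω => Ypot d a ω * χ d' a' ω)
        = Exp P (Ypot d a) * Exp P (χ d' a') := this
    rw [h2, hEχ]; rfl
  have h0m : (0:ℕ) ∈ ({0,1} : Finset ℕ) := by simp
  have h1m : (1:ℕ) ∈ ({0,1} : Finset ℕ) := by simp
  -- abbreviations
  set n : ℕ → (Fin K → ℕ) → ℝ := fun d a => Pr P (evDA D A d a) with hndef
  set μf : ℕ → (Fin K → ℕ) → ℝ := fun d a => muP P Ypot d a with hμdef
  -- pointwise identity for residSFE * indA a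
  have hpt2 : ∀ a ∈ 𝒜, ∀ ω,
      residSFE D A 𝒜 Ypot Δsfe θ ω * (if A ω = a then (1:ℝ) else 0)
        = Ypot 0 a ω * χ 0 a ω + Ypot 1 a ω * χ 1 a ω
          - Δsfe * χ 1 a ω - θ a * χ 0 a ω - θ a * χ 1 a ω := by
    intro a ha ω
    by_cases hAa : A ω = a
    · have hYobs : Yobs D A 𝒜 Ypot ω
          = Ypot 0 a ω * χ 0 a ω + Ypot 1 a ω * χ 1 a ω := by
        unfold Yobs
        rw [Finset.sum_insert (by simp), Finset.sum_singleton]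
        have hinner : ∀ d : ℕ, ∑ a' ∈ 𝒜,
            Ypot d a' ω * (if D ω = d ∧ A ω = a' then (1:ℝ) else 0)
            = Ypot d a ω * χ d a ω := by
          intro d
          rw [Finset.sum_eq_single a]
          · intro a' ha' hne
            have : ¬ (D ω = d ∧ A ω = a') := by
              rintro ⟨_, h2⟩; exact hne (by rw [← h2, hAa])
            simp [this]
          · intro h; exact absurd ha h
        rw [hinner 0, hinner 1]
      have hsum : (∑ a' ∈ 𝒜, θ a' * (if A ω = a' then (1:ℝ) else 0)) = θ a := by
        rw [Finset.sum_eq_single a]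
        · simp [hAa]
        · intro a' ha' hne
          have : A ω ≠ a' := by rw [hAa]; exact fun h => hne h.symm
          simp [this]
        · intro h; exact absurd ha h
      have hD2 : (D ω : ℝ) = χ 1 a ω := by
        rcases hDbin ω with h | h <;> simp [hχdef, h, hAa]
      have hχ0χ1 : χ 0 a ω + χ 1 a ω = 1 := by
        rcases hDbin ω with h | h <;> simp [hχdef, h, hAa]
      unfold residSFE
      rw [hYobs, hsum, hD2, hAa, if_pos rfl]
      linear_combination θ a * hχ0χ1
    · have hz : ∀ d : ℕ, χ d a ω = 0 := by
        intro d; simp [hχdef, hAa]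
      simp [hAa, hz]
  -- pointwise identity for residSFE * D
  have hpt1 : ∀ ω,
      residSFE D A 𝒜 Ypot Δsfe θ ω * (D ω : ℝ)
        = ∑ a ∈ 𝒜, (Ypot 1 a ω * χ 1 a ω - Δsfe * χ 1 a ω - θ a * χ 1 a ω) := by
    intro ω
    have hAω := hAsupp ω
    have hcollapse : ∀ f : (Fin K → ℕ) → ℝ,
        (∑ a ∈ 𝒜, f a * χ 1 a ω) = if D ω = 1 then f (A ω) else 0 := by
      intro f
      rw [Finset.sum_eq_single (A ω)]
      · by_cases h : D ω = 1 <;> simp [hχdef, h]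
      · intro a' _ hne
        have : ¬ (D ω = 1 ∧ A ω = a') := fun ⟨_, h2⟩ => hne h2.symm
        simp [hχdef, this]
      · intro h; exact absurd hAω h
    rcases hDbin ω with h | h
    · have : ∀ a, χ 1 a ω = 0 := by intro a; simp [hχdef, h]
      simp [h, this]
    · have hYobs : Yobs D A 𝒜 Ypot ω = Ypot 1 (A ω) ω := by
        unfold Yobs
        rw [Finset.sum_insert (by simp), Finset.sum_singleton]
        have h0 : ∑ a' ∈ 𝒜, Ypot 0 a' ω * (if D ω = 0 ∧ A ω = a' then (1:ℝ) else 0) = 0 := by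
          apply Finset.sum_eq_zero; intro a' _
          simp [h]
        have h1 : ∑ a' ∈ 𝒜, Ypot 1 a' ω * (if D ω = 1 ∧ A ω = a' then (1:ℝ) else 0)
            = Ypot 1 (A ω) ω := by
          rw [Finset.sum_eq_single (A ω)]
          · simp [h]
          · intro a' _ hne
            have : ¬ (D ω = 1 ∧ A ω = a') := fun ⟨_, h2⟩ => hne h2.symm
            simp [this]
          · intro hn; exact absurd hAω hn
        rw [h0, h1, zero_add]
      have hsum : (∑ a' ∈ 𝒜, θ a' * (if A ω = a' then (1:ℝ) else 0)) = θ (A ω) := by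
        rw [Finset.sum_eq_single (A ω)]
        · simp
        · intro a' _ hne
          have : A ω ≠ a' := fun hh => hne hh.symm
          simp [this]
        · intro hn; exact absurd hAω hn
      have hexp : ∑ a ∈ 𝒜, (Ypot 1 a ω * χ 1 a ω - Δsfe * χ 1 a ω - θ a * χ 1 a ω)
          = (∑ a ∈ 𝒜, Ypot 1 a ω * χ 1 a ω) - (∑ a ∈ 𝒜, Δsfe * χ 1 a ω)
            - (∑ a ∈ 𝒜, θ a * χ 1 a ω) := by
        rw [Finset.sum_sub_distrib, Finset.sum_sub_distrib]
      rw [hexp]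
      have e1 : (∑ a ∈ 𝒜, Ypot 1 a ω * χ 1 a ω) = Ypot 1 (A ω) ω := by
        have := hcollapse (fun a => Ypot 1 a ω); simpa [h] using this
      have e2 : (∑ a ∈ 𝒜, Δsfe * χ 1 a ω) = Δsfe := by
        have := hcollapse (fun _ => Δsfe); simpa [h] using this
      have e3 : (∑ a ∈ 𝒜, θ a * χ 1 a ω) = θ (A ω) := by
        have := hcollapse θ; simpa [h] using this
      rw [e1, e2, e3]
      unfold residSFE
      rw [hYobs, hsum, h]
      push_cast
      ring
  -- integrated identity from hO2
  have key2 : ∀ a ∈ 𝒜,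
      μf 0 a * n 0 a + μf 1 a * n 1 a - Δsfe * n 1 a - θ a * (n 0 a + n 1 a) = 0 := by
    intro a ha
    have hcongr : Exp P (fun ω => residSFE D A 𝒜 Ypot Δsfe θ ω * (if A ω = a then (1:ℝ) else 0))
        = Exp P (fun ω => Ypot 0 a ω * χ 0 a ω + Ypot 1 a ω * χ 1 a ω
          - Δsfe * χ 1 a ω - θ a * χ 0 a ω - θ a * χ 1 a ω) := by
      unfold Exp; exact integral_congr_ae (Filter.Eventually.of_forall (hpt2 a ha))
    have hI00 := hYint 0 h0m a ha 0 a
    have hI11 := hYint 1 h1m a ha 1 a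
    have hsplit : Exp P (fun ω => Ypot 0 a ω * χ 0 a ω + Ypot 1 a ω * χ 1 a ω
          - Δsfe * χ 1 a ω - θ a * χ 0 a ω - θ a * χ 1 a ω)
        = Exp P (fun ω => Ypot 0 a ω * χ 0 a ω) + Exp P (fun ω => Ypot 1 a ω * χ 1 a ω)
          - Δsfe * Exp P (χ 1 a) - θ a * Exp P (χ 0 a) - θ a * Exp P (χ 1 a) := by
      unfold Exp
      rw [integral_sub, integral_sub, integral_sub, integral_add hI00 hI11,
        integral_const_mul, integral_const_mul, integral_const_mul]
      · exact hI00.add hI11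
      · exact (hχint 1 a).const_mul Δsfe
      · exact ((hI00.add hI11).sub ((hχint 1 a).const_mul Δsfe))
      · exact (hχint 0 a).const_mul (θ a)
      · exact (((hI00.add hI11).sub ((hχint 1 a).const_mul Δsfe)).sub
          ((hχint 0 a).const_mul (θ a)))
      · exact (hχint 1 a).const_mul (θ a)
    have h00 := hprod 0 h0m a ha 0 a
    have h11 := hprod 1 h1m a ha 1 a
    have := hO2 a ha
    rw [hcongr, hsplit, h00, h11, hEχ, hEχ] at this
    simp only [hndef, hμdef]
    linarith [this]
  -- integrated identity from hO1
  have key1 : (∑ a ∈ 𝒜, (μf 1 a * n 1 a - Δsfe * n 1 a - θ a * n 1 a)) = 0 := by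
    have hcongr : Exp P (fun ω => residSFE D A 𝒜 Ypot Δsfe θ ω * (D ω : ℝ))
        = Exp P (fun ω => ∑ a ∈ 𝒜, (Ypot 1 a ω * χ 1 a ω - Δsfe * χ 1 a ω - θ a * χ 1 a ω)) := by
      unfold Exp; exact integral_congr_ae (Filter.Eventually.of_forall hpt1)
    have hterm : ∀ a ∈ 𝒜, Integrable
        (fun ω => Ypot 1 a ω * χ 1 a ω - Δsfe * χ 1 a ω - θ a * χ 1 a ω) P := by
      intro a ha
      exact ((hYint 1 h1m a ha 1 a).sub ((hχint 1 a).const_mul Δsfe)).sub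
        ((hχint 1 a).const_mul (θ a))
    have hsplit : Exp P (fun ω => ∑ a ∈ 𝒜,
          (Ypot 1 a ω * χ 1 a ω - Δsfe * χ 1 a ω - θ a * χ 1 a ω))
        = ∑ a ∈ 𝒜, Exp P (fun ω => Ypot 1 a ω * χ 1 a ω - Δsfe * χ 1 a ω - θ a * χ 1 a ω) := by
      unfold Exp; exact integral_finset_sum 𝒜 hterm
    have hEa : ∀ a ∈ 𝒜,
        Exp P (fun ω => Ypot 1 a ω * χ 1 a ω - Δsfe * χ 1 a ω - θ a * χ 1 a ω)
          = μf 1 a * n 1 a - Δsfe * n 1 a - θ a * n 1 a := by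
      intro a ha
      have hI11 := hYint 1 h1m a ha 1 a
      unfold Exp
      rw [integral_sub, integral_sub, integral_const_mul, integral_const_mul]
      · have h11 := hprod 1 h1m a ha 1 a
        have hc := hEχ 1 a
        unfold Exp at h11 hc
        rw [h11, hc]
      · exact hI11
      · exact (hχint 1 a).const_mul Δsfe
      · exact hI11.sub ((hχint 1 a).const_mul Δsfe)
      · exact (hχint 1 a).const_mul (θ a)
    have := hO1
    rw [hcongr, hsplit] at this
    rw [← this]
    exact Finset.sum_congr rfl fun a ha => (hEa a ha).symm
  -- conclude
  by_contra hcon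
  push_neg at hcon
  have hposum : 0 < ∑ a ∈ 𝒜, (μf 1 a * n 1 a - Δsfe * n 1 a - θ a * n 1 a) := by
    apply Finset.sum_pos
    · intro a ha
      have hn0 : 0 < n 0 a := hpos 0 h0m a ha
      have hn1 : 0 < n 1 a := hpos 1 h1m a ha
      have hτ : 0 < μf 1 a - μf 0 a := hEff a ha
      have hk := key2 a ha
      have hfact : (n 0 a + n 1 a) * (μf 1 a * n 1 a - Δsfe * n 1 a - θ a * n 1 a)
          = n 1 a * n 0 a * (μf 1 a - μf 0 a - Δsfe) := by
        linear_combination n 1 a * hk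
      have hpos2 : 0 < n 1 a * n 0 a * (μf 1 a - μf 0 a - Δsfe) := by
        apply mul_pos (mul_pos hn1 hn0); linarith
      nlinarith [hfact, hpos2, hn0, hn1]
    · exact ⟨0, h𝒜0⟩
  rw [key1] at hposum
  exact lt_irrefl 0 hposum
end
end

section
/- (Sequential ignorability implies strong exogeneity.) Suppose sequential ignorability (Assumption 3) holds. Then for every (d,a)∈{0,1}×𝒜 and every x∈𝒳 with P(X=x)>0, the pair (D,A) is independent of Y(d,a) under the conditional probability measure P(·|X=x); that is, for all (d̃,ã,y,a,d), P(Y(d̃,ã)≤y, A=a, D=d | X=x) = P(Y(d̃,ã)≤y | X=x)·P(A=a, D=d | X=x). -/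
open MeasureTheory ProbabilityTheory BigOperators

noncomputable section

variable {Ω : Type} [MeasurableSpace Ω] {K : ℕ}

/-- Sequential ignorability implies strong exogeneity: under Assumption 3, for every x with
P(X=x) > 0 the pair (D,A) (with realized actions A = A(D)) is independent of each potential
outcome Y(d̃,ã) under P(·|X=x), i.e. the joint CDF-type probabilities factorize. -/
theorem seq_ignorability_implies_strong_exogeneity
    (P : Measure Ω) [IsProbabilityMeasure P]
    (D : Ω → ℕ) (X : Ω → ℕ) (𝒳 : Finset ℕ)
    (Apot : ℕ → Ω → Fin K → ℕ) (𝒜 : Finset (Fin K → ℕ))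
    (Ypot : ℕ → (Fin K → ℕ) → Ω → ℝ)
    (hD : Measurable D) (hX : Measurable X) (hApot : ∀ d, Measurable (Apot d))
    (hY : ∀ d a, Measurable (Ypot d a))
    (hDbin : ∀ ω, D ω = 0 ∨ D ω = 1)
    (hXsupp : ∀ ω, X ω ∈ 𝒳) (hAsupp : ∀ d ω, Apot d ω ∈ 𝒜)
    -- Assumption 3 (i): (Y(d',a), A(d)) ⫫ D under P(·|X=x)
    (hSI1 : ∀ d' d : ℕ, (d' = 0 ∨ d' = 1) → (d = 0 ∨ d = 1) → ∀ a ∈ 𝒜, ∀ x ∈ 𝒳,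
      0 < P {ω | X ω = x} →
      IndepFun (fun ω => (Ypot d' a ω, Apot d ω)) D (P[|{ω | X ω = x}]))
    -- Assumption 3 (ii): Y(d',a) ⫫ A(d) under P(·|D=d, X=x)
    (hSI2 : ∀ d' d : ℕ, (d' = 0 ∨ d' = 1) → (d = 0 ∨ d = 1) → ∀ a ∈ 𝒜, ∀ x ∈ 𝒳,
      0 < P {ω | X ω = x} →
      IndepFun (Ypot d' a) (Apot d) (P[|{ω | D ω = d ∧ X ω = x}]))
    -- Overlap: 0 < P(D=d | X=x)
    (hOv1 : ∀ d : ℕ, (d = 0 ∨ d = 1) → ∀ x ∈ 𝒳, 0 < P {ω | X ω = x} →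
      0 < P[|{ω | X ω = x}] {ω | D ω = d})
    -- Overlap: 0 < P(A(d)=a | D=d, X=x)
    (hOv2 : ∀ d : ℕ, (d = 0 ∨ d = 1) → ∀ a ∈ 𝒜, ∀ x ∈ 𝒳, 0 < P {ω | X ω = x} →
      0 < P[|{ω | D ω = d ∧ X ω = x}] {ω | Apot d ω = a}) :
    ∀ dtil : ℕ, (dtil = 0 ∨ dtil = 1) → ∀ atil ∈ 𝒜, ∀ y : ℝ,
    ∀ d : ℕ, (d = 0 ∨ d = 1) → ∀ a ∈ 𝒜, ∀ x ∈ 𝒳, 0 < P {ω | X ω = x} →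
      P[|{ω | X ω = x}] {ω | Ypot dtil atil ω ≤ y ∧ Apot (D ω) ω = a ∧ D ω = d}
        = P[|{ω | X ω = x}] {ω | Ypot dtil atil ω ≤ y}
          * P[|{ω | X ω = x}] {ω | Apot (D ω) ω = a ∧ D ω = d} := by
  intro dtil hdtil atil hatil y d hd a ha x hx hPx
  classical
  set Y := Ypot dtil atil with hYdef
  set s : Set Ω := {ω | X ω = x} with hs
  set sd : Set Ω := {ω | D ω = d ∧ X ω = x} with hsd
  set EY : Set Ω := {ω | Y ω ≤ y} with hEY
  set EA : Set Ω := {ω | Apot d ω = a} with hEA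
  set ED : Set Ω := {ω | D ω = d} with hED
  have hmsS : MeasurableSet s := hX (measurableSet_singleton x)
  have hmsED : MeasurableSet ED := hD (measurableSet_singleton d)
  have hsdeq : sd = s ∩ ED := by ext ω; simp only [hsd, hs, hED,
    Set.mem_setOf_eq, Set.mem_inter_iff]; exact and_comm
  have hmsSD : MeasurableSet sd := hsdeq ▸ hmsS.inter hmsED
  -- rewrite the goal's sets
  have hset1 : {ω | Y ω ≤ y ∧ Apot (D ω) ω = a ∧ D ω = d} = EY ∩ EA ∩ ED := by
    ext ω
    simp only [Set.mem_setOf_eq, Set.mem_inter_iff, hEY, hEA, hED]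
    constructor
    · rintro ⟨h1, h2, h3⟩
      rw [h3] at h2
      exact ⟨⟨h1, h2⟩, h3⟩
    · rintro ⟨⟨h1, h2⟩, h3⟩
      exact ⟨h1, by rwa [h3], h3⟩
  have hset2 : {ω | Apot (D ω) ω = a ∧ D ω = d} = EA ∩ ED := by
    ext ω
    simp only [Set.mem_setOf_eq, Set.mem_inter_iff, hEA, hED]
    constructor
    · rintro ⟨h2, h3⟩; rw [h3] at h2; exact ⟨h2, h3⟩
    · rintro ⟨h2, h3⟩; exact ⟨by rwa [h3], h3⟩
  rw [hset1, hset2]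
  -- basic quantities
  have hp0 : P s ≠ 0 := hPx.ne'
  have hpt : P s ≠ ⊤ := measure_ne_top P s
  -- q > 0 from hOv1
  have hQD := hOv1 d hd x hx hPx
  rw [cond_apply hmsS] at hQD
  have hq0 : P sd ≠ 0 := by
    rw [hsdeq]
    intro h
    rw [h, mul_zero] at hQD
    exact lt_irrefl 0 hQD
  have hqt : P sd ≠ ⊤ := measure_ne_top P sd
  -- independence fact from hSI1 : Y ⫫ D under P[|s]
  have hI1 := (hSI1 dtil d hdtil hd atil hatil x hx hPx).measure_inter_preimage_eq_mul
    (Set.Iic y ×ˢ (Set.univ : Set (Fin K → ℕ))) {d}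
    (measurableSet_Iic.prod MeasurableSet.univ) (measurableSet_singleton d)
  have hpre1 : (fun ω => (Y ω, Apot d ω)) ⁻¹' (Set.Iic y ×ˢ Set.univ) = EY := by
    ext ω; simp [hEY]
  have hpre2 : D ⁻¹' {d} = ED := rfl
  rw [hpre1, hpre2, cond_apply hmsS, cond_apply hmsS, cond_apply hmsS] at hI1
  -- independence fact from hSI2 : Y ⫫ Apot d under P[|sd]
  have hI2 := (hSI2 dtil d hdtil hd atil hatil x hx hPx).measure_inter_preimage_eq_mul
    (Set.Iic y) {a} measurableSet_Iic (measurableSet_singleton a)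
  have hpre3 : Y ⁻¹' Set.Iic y = EY := rfl
  have hpre4 : Apot d ⁻¹' {a} = EA := rfl
  rw [hpre3, hpre4, cond_apply hmsSD, cond_apply hmsSD, cond_apply hmsSD] at hI2
  -- rewrite goal with cond_apply
  rw [cond_apply hmsS, cond_apply hmsS, cond_apply hmsS]
  -- set rearrangements
  have e1 : s ∩ (EY ∩ EA ∩ ED) = sd ∩ (EY ∩ EA) := by
    rw [hsdeq]; ext ω; simp only [Set.mem_inter_iff]; tauto
  have e2 : s ∩ (EA ∩ ED) = sd ∩ EA := by
    rw [hsdeq]; ext ω; simp only [Set.mem_inter_iff]; tauto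
  have e3 : s ∩ (EY ∩ ED) = sd ∩ EY := by
    rw [hsdeq]; ext ω; simp only [Set.mem_inter_iff]; tauto
  rw [e1, e2]
  -- key equation from hI2, cleared of the inverse
  have key2 : P (sd ∩ (EY ∩ EA)) = (P sd)⁻¹ * P (sd ∩ EY) * P (sd ∩ EA) := by
    have := hI2
    calc P (sd ∩ (EY ∩ EA)) = P sd * ((P sd)⁻¹ * P (sd ∩ (EY ∩ EA))) := by
          rw [← mul_assoc, ENNReal.mul_inv_cancel hq0 hqt, one_mul]
      _ = P sd * ((P sd)⁻¹ * P (sd ∩ EY) * ((P sd)⁻¹ * P (sd ∩ EA))) := by rw [this]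
      _ = (P sd * (P sd)⁻¹) * ((P sd)⁻¹ * P (sd ∩ EY) * P (sd ∩ EA)) := by ring
      _ = (P sd)⁻¹ * P (sd ∩ EY) * P (sd ∩ EA) := by
          rw [ENNReal.mul_inv_cancel hq0 hqt, one_mul]
  -- key equation from hI1 : P (sd ∩ EY) = (P s)⁻¹ * P (s ∩ EY) * P sd
  have key1 : P (sd ∩ EY) = (P s)⁻¹ * P (s ∩ EY) * P sd := by
    have h := hI1
    rw [Set.inter_comm EY ED, ← Set.inter_assoc] at h
    -- h : (P s)⁻¹ * P (s ∩ ED ∩ EY) = ...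
    have hs1 : s ∩ ED ∩ EY = sd ∩ EY := by rw [hsdeq]
    rw [hs1] at h
    calc P (sd ∩ EY) = P s * ((P s)⁻¹ * P (sd ∩ EY)) := by
          rw [← mul_assoc, ENNReal.mul_inv_cancel hp0 hpt, one_mul]
      _ = P s * ((P s)⁻¹ * P (s ∩ EY) * ((P s)⁻¹ * P (s ∩ ED))) := by rw [h]
      _ = (P s * (P s)⁻¹) * ((P s)⁻¹ * P (s ∩ EY) * P (s ∩ ED)) := by ring
      _ = (P s)⁻¹ * P (s ∩ EY) * P sd := by
          rw [ENNReal.mul_inv_cancel hp0 hpt, one_mul, hsdeq]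
  calc (P s)⁻¹ * P (sd ∩ (EY ∩ EA))
      = (P s)⁻¹ * ((P sd)⁻¹ * ((P s)⁻¹ * P (s ∩ EY) * P sd) * P (sd ∩ EA)) := by
        rw [key2, key1]
    _ = ((P sd)⁻¹ * P sd) * ((P s)⁻¹ * P (s ∩ EY) * ((P s)⁻¹ * P (sd ∩ EA))) := by ring
    _ = (P s)⁻¹ * P (s ∩ EY) * ((P s)⁻¹ * P (sd ∩ EA)) := by
        rw [ENNReal.inv_mul_cancel hq0 hqt, one_mul]
end
end
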